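/- Let X be a complex Banach space, let P be an L-projection on X** with range i_X(X), and let Y be a closed subspace of X such that P maps Y^{⊥⊥} onto i_X(Y). Then Y is proximinal in X, i.e., for every x ∈ X there exists y₀ ∈ Y with ‖x − y₀‖ = dist(x, Y); moreover, for every x ∈ X the set {y ∈ Y : ‖x − y‖ = dist(x, Y)} of best approximations to x from Y is compact in the weak topology of X. -/

import Mathlib

open NormedSpace

noncomputable section

set_option maxHeartbeats 1000000

/-- The transpose (dual map) of a continuous linear map between (semi)normed spaces:
`ctranspose f` sends a functional `g` to `g ∘ f`. -/
def ctranspose {E F : Type*} [SeminormedAddCommGroup E] [NormedSpace ℂ E]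
    [SeminormedAddCommGroup F] [NormedSpace ℂ F] (f : E →L[ℂ] F) :
    StrongDual ℂ F →L[ℂ] StrongDual ℂ E :=
  (ContinuousLinearMap.compL ℂ E F ℂ).flip f

/-- A bounded linear projection `P` is an L-projection if `‖z‖ = ‖P z‖ + ‖z - P z‖`
for all `z`. -/
def IsLProjection {Z : Type*} [SeminormedAddCommGroup Z] [NormedSpace ℂ Z]
    (P : Z →L[ℂ] Z) : Prop :=
  (∀ z, P (P z) = P z) ∧ ∀ z, ‖z‖ = ‖P z‖ + ‖z - P z‖

namespace LProjAux

variable {X : Type*} [NormedAddCommGroup X] [NormedSpace ℂ X] [CompleteSpace X]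

lemma norm_incl (x : X) : ‖inclusionInDoubleDual ℂ X x‖ = ‖x‖ :=
  (inclusionInDoubleDualLi ℂ (E := X)).norm_map x

/-- The candidate set in the weak-star dual. -/
def Kset (Y : Subspace ℂ X) (x : X) (c : ℝ) : Set (WeakDual ℂ (StrongDual ℂ X)) :=
  {Φ | (∀ f : StrongDual ℂ X, (∀ y ∈ Y, f y = 0) → Φ f = 0) ∧
    ∀ f : StrongDual ℂ X, ‖f x - Φ f‖ ≤ c * ‖f‖}

lemma isClosed_Kset (Y : Subspace ℂ X) (x : X) (c : ℝ) : IsClosed (Kset Y x c) := by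
  have h1 : IsClosed {Φ : WeakDual ℂ (StrongDual ℂ X) |
      ∀ f : StrongDual ℂ X, (∀ y ∈ Y, f y = 0) → Φ f = 0} := by
    have : {Φ : WeakDual ℂ (StrongDual ℂ X) | ∀ f : StrongDual ℂ X, (∀ y ∈ Y, f y = 0) → Φ f = 0}
        = ⋂ f ∈ {f : StrongDual ℂ X | ∀ y ∈ Y, f y = 0}, {Φ : WeakDual ℂ (StrongDual ℂ X) | Φ f = 0} := by
      ext Φ; simp [Set.mem_iInter]
    rw [this]
    exact isClosed_biInter fun f _ =>
      isClosed_eq (WeakDual.eval_continuous f) continuous_const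
  have h2 : IsClosed {Φ : WeakDual ℂ (StrongDual ℂ X) | ∀ f : StrongDual ℂ X, ‖f x - Φ f‖ ≤ c * ‖f‖} := by
    have : {Φ : WeakDual ℂ (StrongDual ℂ X) | ∀ f : StrongDual ℂ X, ‖f x - Φ f‖ ≤ c * ‖f‖}
        = ⋂ f : StrongDual ℂ X, {Φ : WeakDual ℂ (StrongDual ℂ X) | ‖f x - Φ f‖ ≤ c * ‖f‖} := by
      ext Φ; simp [Set.mem_iInter]
    rw [this]
    exact isClosed_iInter fun f =>
      isClosed_le ((continuous_const.sub (WeakDual.eval_continuous f)).norm) continuous_const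
  exact h1.inter h2

lemma isCompact_Kset (Y : Subspace ℂ X) (x : X) (c : ℝ) : IsCompact (Kset Y x c) := by
  refine WeakDual.isCompact_of_bounded_of_closed ?_ (isClosed_Kset Y x c)
  refine (Metric.isBounded_closedBall (x := (0 : StrongDual ℂ (StrongDual ℂ X))) (r := ‖x‖ + |c|)).subset ?_
  rintro Ψ ⟨-, h2⟩
  rw [Metric.mem_closedBall]
  rw [dist_zero_right (E := StrongDual ℂ (StrongDual ℂ X))]
  refine ContinuousLinearMap.opNorm_le_bound _ (by positivity) fun f => ?_
  have : ‖Ψ f‖ ≤ ‖f x‖ + ‖f x - Ψ f‖ := by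
    have := norm_sub_norm_le (f x) (f x - Ψ f)
    have h' : f x - (f x - Ψ f) = Ψ f := by ring
    calc ‖Ψ f‖ = ‖f x - (f x - Ψ f)‖ := by rw [h']
      _ ≤ ‖f x‖ + ‖f x - Ψ f‖ := norm_sub_le _ _
  calc ‖Ψ f‖ ≤ ‖f x‖ + ‖f x - Ψ f‖ := this
    _ ≤ ‖f‖ * ‖x‖ + c * ‖f‖ := add_le_add (f.le_opNorm x) (h2 f)
    _ ≤ ‖x‖ * ‖f‖ + |c| * ‖f‖ := by
        rw [mul_comm]
        gcongr
        exact le_abs_self c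
    _ = (‖x‖ + |c|) * ‖f‖ := by ring

/-- Membership of `i y` in `Kset`. -/
lemma incl_mem_Kset {Y : Subspace ℂ X} {x : X} {c : ℝ} {y : X} (hy : y ∈ Y)
    (hxy : ‖x - y‖ ≤ c) :
    (StrongDual.toWeakDual (inclusionInDoubleDual ℂ X y)) ∈ Kset Y x c := by
  constructor
  · intro f hf
    exact hf y hy
  · intro f
    have : f x - inclusionInDoubleDual ℂ X y f = f (x - y) := by
      rw [map_sub]; rfl
    rw [show ((StrongDual.toWeakDual (inclusionInDoubleDual ℂ X y)) : StrongDual ℂ X → ℂ) f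
        = inclusionInDoubleDual ℂ X y f from rfl, this]
    calc ‖f (x - y)‖ ≤ ‖f‖ * ‖x - y‖ := f.le_opNorm _
      _ ≤ ‖f‖ * c := mul_le_mul_of_nonneg_left hxy (norm_nonneg f)
      _ = c * ‖f‖ := mul_comm _ _

/-- Key consequence of the L-projection hypotheses. -/
lemma key (P : StrongDual ℂ (StrongDual ℂ X) →L[ℂ] StrongDual ℂ (StrongDual ℂ X))
    (hP : IsLProjection (Z := StrongDual ℂ (StrongDual ℂ X)) P)
    (hrange : Set.range P = Set.range (inclusionInDoubleDual ℂ X))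
    (Y : Subspace ℂ X)
    (hPY : P '' {Ψ : StrongDual ℂ (StrongDual ℂ X) | ∀ f : StrongDual ℂ X, (∀ y ∈ Y, f y = 0) → Ψ f = 0}
        = inclusionInDoubleDual ℂ X '' (Y : Set X))
    (x : X) (Ψ : StrongDual ℂ (StrongDual ℂ X))
    (hS : ∀ f : StrongDual ℂ X, (∀ y ∈ Y, f y = 0) → Ψ f = 0)
    (hd : ‖inclusionInDoubleDual ℂ X x - Ψ‖ ≤ Metric.infDist x (Y : Set X)) :
    ∃ y ∈ Y, ‖x - y‖ = Metric.infDist x (Y : Set X) ∧ inclusionInDoubleDual ℂ X y = Ψ := by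
  set ι := inclusionInDoubleDual ℂ X with hι
  obtain ⟨y, hyY, hy⟩ : P Ψ ∈ ι '' (Y : Set X) := by
    rw [← hPY]; exact ⟨Ψ, hS, rfl⟩
  have hPx : P (ι x) = ι x := by
    have : ι x ∈ Set.range P := by rw [hrange]; exact ⟨x, rfl⟩
    obtain ⟨z, hz⟩ := this
    rw [← hz, hP.1]
  have hL := hP.2 (ι x - Ψ)
  rw [map_sub P, hPx, ← hy] at hL
  have e1 : ι x - ι y = ι (x - y) := (map_sub ι x y).symm
  have e2 : (ι x - Ψ) - (ι x - ι y) = ι y - Ψ := by abel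
  rw [e2, e1, norm_incl] at hL
  have hdy : Metric.infDist x (Y : Set X) ≤ ‖x - y‖ := by
    rw [← dist_eq_norm]; exact Metric.infDist_le_dist_of_mem hyY
  have hz : ‖ι y - Ψ‖ ≤ 0 := by linarith
  have hz' : ι y - Ψ = 0 := (norm_le_zero_iff (E := StrongDual ℂ (StrongDual ℂ X))).mp hz
  have hEq : ι y = Ψ := sub_eq_zero.mp hz'
  refine ⟨y, hyY, ?_, hEq⟩
  have : ‖ι y - Ψ‖ = 0 := by rw [hz']; exact norm_zero (E := StrongDual ℂ (StrongDual ℂ X))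
  linarith

end LProjAux

open LProjAux in
/-- If `P` is an L-projection on `X**` with range `i_X(X)`, and `Y` is a closed
subspace of `X` such that `P` maps `Y^{⊥⊥}` onto `i_X(Y)`, then `Y` is proximinal in `X` and
the set of best approximations to any `x ∈ X` from `Y` is weakly compact. -/
theorem proximinal_and_weakly_compact_best_approximations
    (X : Type*) [NormedAddCommGroup X] [NormedSpace ℂ X] [CompleteSpace X]
    (P : StrongDual ℂ (StrongDual ℂ X) →L[ℂ] StrongDual ℂ (StrongDual ℂ X))
    (hP : IsLProjection (Z := StrongDual ℂ (StrongDual ℂ X)) P)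
    (hrange : Set.range P = Set.range (inclusionInDoubleDual ℂ X))
    (Y : Subspace ℂ X) (hY : IsClosed (Y : Set X))
    (hPY : P '' {Ψ : StrongDual ℂ (StrongDual ℂ X) | ∀ f : StrongDual ℂ X, (∀ y ∈ Y, f y = 0) → Ψ f = 0}
        = inclusionInDoubleDual ℂ X '' (Y : Set X)) :
    (∀ x : X, ∃ y₀ ∈ Y, ‖x - y₀‖ = Metric.infDist x (Y : Set X)) ∧
    (∀ x : X, IsCompact (toWeakSpace ℂ X ''
        {y : X | y ∈ Y ∧ ‖x - y‖ = Metric.infDist x (Y : Set X)})) := by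
  set ι := inclusionInDoubleDual ℂ X with hι
  have hd0 : ∀ x : X, 0 ≤ Metric.infDist x (Y : Set X) := fun x => Metric.infDist_nonneg
  -- Step 1: the set `Kset Y x d` is nonempty, where `d = infDist x Y`.
  have hKne : ∀ x : X, (Kset Y x (Metric.infDist x (Y : Set X))).Nonempty := by
    intro x
    set d := Metric.infDist x (Y : Set X) with hdd
    -- nested compact sets
    have hsub : ∀ ε : {c : ℝ // 0 < c}, (Kset Y x (d + ε.1)).Nonempty := by
      rintro ⟨ε, hε⟩
      have hne : (Y : Set X).Nonempty := ⟨0, Y.zero_mem⟩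
      have : d < d + ε := by linarith
      obtain ⟨y, hyY, hy⟩ := (Metric.infDist_lt_iff hne).mp this
      rw [dist_eq_norm] at hy
      exact ⟨_, incl_mem_Kset hyY hy.le⟩
    have hdir : Directed (· ⊇ ·) (fun ε : {c : ℝ // 0 < c} => Kset Y x (d + ε.1)) := by
      rintro ⟨a, ha⟩ ⟨b, hb⟩
      have hmono : ∀ c c' : ℝ, c ≤ c' → Kset Y x c ⊆ Kset Y x c' := by
        rintro c c' hcc Φ ⟨h1, h2⟩
        exact ⟨h1, fun f => (h2 f).trans (mul_le_mul_of_nonneg_right hcc (norm_nonneg f))⟩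
      exact ⟨⟨min a b, lt_min ha hb⟩,
        hmono _ _ (by simp [min_le_left]),
        hmono _ _ (by simp [min_le_right])⟩
    have hne := IsCompact.nonempty_iInter_of_directed_nonempty_isCompact_isClosed
      (fun ε : {c : ℝ // 0 < c} => Kset Y x (d + ε.1)) hdir hsub
      (fun ε => isCompact_Kset Y x _) (fun ε => isClosed_Kset Y x _)
    obtain ⟨Φ, hΦ⟩ := hne
    rw [Set.mem_iInter] at hΦ
    refine ⟨Φ, (hΦ ⟨1, one_pos⟩).1, fun f => ?_⟩
    refine le_of_forall_pos_le_add fun ε hε => ?_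
    have hε' : 0 < ε / (‖f‖ + 1) := by positivity
    have := (hΦ ⟨ε / (‖f‖ + 1), hε'⟩).2 f
    have hf1 : ε / (‖f‖ + 1) * ‖f‖ ≤ ε := by
      rw [div_mul_eq_mul_div, div_le_iff₀ (by positivity)]
      nlinarith [norm_nonneg f]
    nlinarith [norm_nonneg f]
  -- Step 2: everything in `Kset Y x d` is of the form `ι y` for a best approximation `y`.
  have hKmem : ∀ x : X, ∀ Φ ∈ Kset Y x (Metric.infDist x (Y : Set X)),
      ∃ y ∈ Y, ‖x - y‖ = Metric.infDist x (Y : Set X) ∧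
        StrongDual.toWeakDual (ι y) = Φ := by
    intro x Φ hΦ
    have hnorm : ‖ι x - WeakDual.toStrongDual Φ‖ ≤ Metric.infDist x (Y : Set X) := by
      refine ContinuousLinearMap.opNorm_le_bound _ (hd0 x) fun f => ?_
      exact hΦ.2 f
    obtain ⟨y, hyY, hxy, hEq⟩ := key P hP hrange Y hPY x (WeakDual.toStrongDual Φ)
      (fun f hf => hΦ.1 f hf) hnorm
    exact ⟨y, hyY, hxy, congrArg StrongDual.toWeakDual hEq⟩
  constructor
  · intro x
    obtain ⟨Φ, hΦ⟩ := hKne x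
    obtain ⟨y, hyY, hxy, -⟩ := hKmem x Φ hΦ
    exact ⟨y, hyY, hxy⟩
  · intro x
    set d := Metric.infDist x (Y : Set X) with hdd
    set A := {y : X | y ∈ Y ∧ ‖x - y‖ = d} with hA
    -- the map from the weak space to the weak-star bidual
    set g : WeakSpace ℂ X → WeakDual ℂ (StrongDual ℂ X) :=
      fun z => StrongDual.toWeakDual (ι ((toWeakSpace ℂ X).symm z)) with hg
    have hind : Topology.IsInducing g := by
      constructor
      rw [show (instTopologicalSpaceWeakDual .. : TopologicalSpace (WeakDual ℂ (StrongDual ℂ X)))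
          = TopologicalSpace.induced (fun Φ (f : StrongDual ℂ X) => Φ f) Pi.topologicalSpace from rfl,
        induced_compose]
      rfl
    have himg : g '' (toWeakSpace ℂ X '' A) = Kset Y x d := by
      rw [Set.image_image]
      ext Φ
      constructor
      · rintro ⟨y, ⟨hyY, hxy⟩, rfl⟩
        simpa [g] using incl_mem_Kset (x := x) hyY hxy.le
      · intro hΦ
        obtain ⟨y, hyY, hxy, hEq⟩ := hKmem x Φ hΦ
        exact ⟨y, ⟨hyY, hxy⟩, by simpa [g] using hEq⟩
    have : IsCompact (g '' (toWeakSpace ℂ X '' A)) := by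
      rw [himg]; exact isCompact_Kset Y x d
    exact hind.isCompact_iff.mpr this
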